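/- Let I_s > 0, V_T > 0, R > 0, and j ≥ 0. Then i = j + I_s − (V_T/R)·W₀((I_s·R/V_T)·exp((R/V_T)·(j + I_s))) is the unique real solution of the equation i·R = V_T·ln((j − i)/I_s + 1) with i < j + I_s, where W₀ denotes the principal branch of the Lambert W function. -/

import Mathlib

/-- Principal branch of the Lambert W function on `[0, ∞)`:
for `x ≥ 0`, `W0 x` is the unique `y ≥ 0` with `y * exp y = x`. -/
noncomputable def W0 (x : ℝ) : ℝ :=
  Function.invFunOn (fun y : ℝ => y * Real.exp y) (Set.Ici 0) x

lemma f_smono : StrictMonoOn (fun y : ℝ => y * Real.exp y) (Set.Ici 0) := by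
  intro a ha b hb hab
  simp only [Set.mem_Ici] at ha hb
  have h1 : Real.exp a < Real.exp b := Real.exp_lt_exp.mpr hab
  have h2 : 0 < Real.exp a := Real.exp_pos a
  simp only
  nlinarith

lemma W0_spec (x : ℝ) (hx : 0 ≤ x) :
    0 ≤ W0 x ∧ W0 x * Real.exp (W0 x) = x := by
  have hex : ∃ y ∈ Set.Ici (0:ℝ), y * Real.exp y = x := by
    have hcont : ContinuousOn (fun y : ℝ => y * Real.exp y) (Set.Icc 0 x) :=
      (continuous_id.mul Real.continuous_exp).continuousOn
    have hsub := intermediate_value_Icc hx hcont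
    have hmem : x ∈ Set.Icc ((fun y : ℝ => y * Real.exp y) 0)
        ((fun y : ℝ => y * Real.exp y) x) := by
      simp only [Set.mem_Icc]
      constructor
      · simpa using hx
      · have := Real.one_le_exp hx
        nlinarith
    obtain ⟨y, hy, hfy⟩ := hsub hmem
    exact ⟨y, hy.1, hfy⟩
  exact ⟨Function.invFunOn_mem hex, Function.invFunOn_eq hex⟩

theorem eh_current_closed_form_unique
    (Is VT R j : ℝ) (hIs : 0 < Is) (hVT : 0 < VT) (hR : 0 < R) (hj : 0 ≤ j) :
    ∀ i : ℝ,
      (i < j + Is ∧ i * R = VT * Real.log ((j - i) / Is + 1)) ↔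
      i = j + Is - (VT / R) * W0 ((Is * R / VT) * Real.exp ((R / VT) * (j + Is))) := by
  intro i
  set A : ℝ := (R / VT) * (j + Is) with hA
  set x : ℝ := (Is * R / VT) * Real.exp A with hxdef
  have hxpos : 0 < x := by
    apply mul_pos _ (Real.exp_pos A)
    positivity
  set w : ℝ := W0 x with hwdef
  obtain ⟨hw0, hwe⟩ := W0_spec x hxpos.le
  have hwpos : 0 < w := by
    rcases lt_or_eq_of_le hw0 with h | h
    · exact h
    · exfalso; rw [← h] at hwe; simp at hwe; linarith
  constructor
  · rintro ⟨hlt, heq⟩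
    have hd : 0 < j + Is - i := by linarith
    have hrw : (j - i) / Is + 1 = (j + Is - i) / Is := by
      field_simp
      ring
    rw [hrw] at heq
    have hlog : Real.log ((j + Is - i) / Is) = (R / VT) * i := by
      field_simp at heq ⊢
      linarith
    have hexp : Real.exp ((R / VT) * i) = (j + Is - i) / Is := by
      rw [← hlog, Real.exp_log (by positivity)]
    set u : ℝ := (R / VT) * (j + Is - i) with hu
    have hu0 : 0 < u := by positivity
    have hue : u * Real.exp u = x := by
      have h1 : u = A - (R / VT) * i := by rw [hu, hA]; ring
      have hexpu : Real.exp u = Real.exp A * Is / (j + Is - i) := by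
        rw [h1, Real.exp_sub, hexp]
        field_simp
      rw [hexpu, hu, hxdef]
      field_simp
    have : u = w := f_smono.injOn hu0.le hw0 (by rw [hue, ← hwe])
    have hiw : (VT / R) * w = j + Is - i := by
      rw [← this, hu]
      field_simp
    linarith
  · intro hi
    have hd : j + Is - i = (VT / R) * w := by rw [hi]; ring
    have hVTRw : 0 < (VT / R) * w := by positivity
    constructor
    · linarith
    · have hrw : (j - i) / Is + 1 = (VT * w) / (R * Is) := by
        have hji : j - i = VT / R * w - Is := by linarith
        rw [hji]
        field_simp
        ring
      rw [hrw]
      have hlogx : Real.log w + w = Real.log (Is * R / VT) + A := by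
        have := congrArg Real.log hwe
        rw [Real.log_mul (ne_of_gt hwpos) (Real.exp_ne_zero _), Real.log_exp,
          hxdef, Real.log_mul (by positivity) (Real.exp_ne_zero _), Real.log_exp] at this
        linarith
      have hlog2 : Real.log ((VT * w) / (R * Is)) = A - w := by
        rw [show (VT * w) / (R * Is) = w / (Is * R / VT) by field_simp,
          Real.log_div (ne_of_gt hwpos) (by positivity)]
        linarith
      rw [hlog2, hA]
      rw [hi]
      field_simp
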